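/- Let d be a natural number, A a d × d matrix with entries in ℂ[t], and t₀ ∈ ℂ. If det A vanishes to first order at t₀ (i.e. (t − t₀) divides det A in ℂ[t] but (t − t₀)² does not), then the kernel of the evaluated matrix A(t₀) is exactly one-dimensional as a ℂ-vector space. -/

import Mathlib

open Polynomial Matrix

/-- Factoring `(X - C t₀)` out of two distinct columns of a matrix gives divisibility
of the determinant by `(X - C t₀)^2`. -/
lemma sq_dvd_det_of_two_columns (d : ℕ) (M : Matrix (Fin d) (Fin d) (Polynomial ℂ))
    (t₀ : ℂ) (i j : Fin d) (hij : i ≠ j)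
    (hi : ∀ k, (Polynomial.X - Polynomial.C t₀) ∣ M k i)
    (hj : ∀ k, (Polynomial.X - Polynomial.C t₀) ∣ M k j) :
    (Polynomial.X - Polynomial.C t₀) ^ 2 ∣ M.det := by
  set p : Polynomial ℂ := Polynomial.X - Polynomial.C t₀ with hp
  choose g hg using hi
  choose h hh using hj
  have e1 : M = M.updateCol i (p • g) := by
    rw [show p • g = fun k => M k i from funext fun k => (hg k).symm,
      Matrix.updateCol_eq_self]
  have e2 : M.updateCol i g = (M.updateCol i g).updateCol j (p • h) := by
    rw [show p • h = fun k => (M.updateCol i g) k j from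
      funext fun k => by rw [Matrix.updateCol_ne (Ne.symm hij)]; exact (hh k).symm,
      Matrix.updateCol_eq_self]
  have k1 : M.det = p * (M.updateCol i g).det := by
    conv_lhs => rw [e1]
    rw [Matrix.det_updateCol_smul]
  have k2 : (M.updateCol i g).det
      = p * ((M.updateCol i g).updateCol j h).det := by
    conv_lhs => rw [e2]
    rw [Matrix.det_updateCol_smul]
  refine ⟨((M.updateCol i g).updateCol j h).det, ?_⟩
  rw [k1, k2]; ring

/-- If `det A` vanishes to first order at `t₀` (i.e. `(t − t₀)` divides `det A` but
`(t − t₀)²` does not), then the kernel of the evaluated matrix `A(t₀)` is exactly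
one-dimensional. -/
theorem ker_one_dim_of_det_vanishes_first_order (d : ℕ)
    (A : Matrix (Fin d) (Fin d) (Polynomial ℂ)) (t₀ : ℂ)
    (h1 : (Polynomial.X - Polynomial.C t₀) ∣ A.det)
    (h2 : ¬ (Polynomial.X - Polynomial.C t₀) ^ 2 ∣ A.det) :
    Module.finrank ℂ
      (LinearMap.ker (Matrix.toLin' (A.map (Polynomial.eval t₀)))) = 1 := by
  classical
  set B : Matrix (Fin d) (Fin d) ℂ := A.map (Polynomial.eval t₀) with hB
  set K := LinearMap.ker (Matrix.toLin' B) with hK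
  have hdetB : B.det = 0 := by
    have h0 : Polynomial.IsRoot A.det t₀ := Polynomial.dvd_iff_isRoot.mp h1
    have heq : B.det = Polynomial.eval t₀ A.det := by
      rw [hB, show (Polynomial.eval t₀ : Polynomial ℂ → ℂ) = ⇑(Polynomial.evalRingHom t₀) from rfl,
        ← RingHom.mapMatrix_apply, ← RingHom.map_det]
    rw [heq]; exact h0
  -- lower bound
  have hlow : 0 < Module.finrank ℂ K := by
    obtain ⟨v, hv0, hv⟩ := (Matrix.exists_mulVec_eq_zero_iff.mpr hdetB)
    have hmem : v ∈ K := by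
      simp [hK, LinearMap.mem_ker, Matrix.toLin'_apply, hv]
    rw [Module.finrank_pos_iff]
    exact ⟨⟨⟨v, hmem⟩, 0, by simpa using hv0⟩⟩
  -- upper bound
  by_contra hne
  have h2le : 2 ≤ Module.finrank ℂ K := by omega
  -- get two linearly independent kernel vectors
  let b0 : Module.Basis (Fin (Module.finrank ℂ K)) ℂ K := Module.finBasis ℂ K
  let w : Fin 2 → (Fin d → ℂ) := fun s => (b0 (Fin.castLE h2le s) : Fin d → ℂ)
  have hwker : ∀ s, B.mulVec (w s) = 0 := by
    intro s
    have hmem : Matrix.toLin' B (w s) = 0 :=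
      LinearMap.mem_ker.mp (SetLike.coe_mem (b0 (Fin.castLE h2le s)))
    rwa [Matrix.toLin'_apply] at hmem
  have li : LinearIndependent ℂ w := by
    have l1 : LinearIndependent ℂ (fun s : Fin 2 => b0 (Fin.castLE h2le s)) :=
      b0.linearIndependent.comp _ (Fin.castLE_injective h2le)
    exact l1.map' K.subtype (Submodule.ker_subtype K)
  -- extend to a basis of ℂ^d
  have hsub := Module.Basis.subset_extend ((linearIndepOn_id_range_iff li.injective).mpr li)
  let bE := Module.Basis.extend ((linearIndepOn_id_range_iff li.injective).mpr li)
  haveI : Fintype (((linearIndepOn_id_range_iff li.injective).mpr li).extend (Set.subset_univ _)) :=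
    FiniteDimensional.fintypeBasisIndex bE
  let e := bE.indexEquiv (Pi.basisFun ℂ (Fin d))
  let b' : Module.Basis (Fin d) ℂ (Fin d → ℂ) := bE.reindex e
  have hb' : ∀ s : Fin 2, b' (e ⟨w s, hsub ⟨s, rfl⟩⟩) = w s := by
    intro s
    rw [Module.Basis.reindex_apply, Equiv.symm_apply_apply, Module.Basis.extend_apply_self]
  set i : Fin d := e ⟨w 0, hsub ⟨0, rfl⟩⟩ with hi
  set j : Fin d := e ⟨w 1, hsub ⟨1, rfl⟩⟩ with hj
  have hij : i ≠ j := by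
    intro hcon
    have : w 0 = w 1 := by
      rw [← hb' 0, ← hb' 1, hi, hj] at *
      rw [hcon]
    exact (li.injective.ne (by decide : (0 : Fin 2) ≠ 1)) this
  -- the change-of-basis matrix
  let Q : Matrix (Fin d) (Fin d) ℂ := (Pi.basisFun ℂ (Fin d)).toMatrix b'
  have hQ : ∀ k l, Q k l = b' l k := by
    intro k l
    simp [Q, Module.Basis.toMatrix_apply]
  haveI : Invertible Q := (Pi.basisFun ℂ (Fin d)).invertibleToMatrix b'
  have hQdet : IsUnit Q.det := Matrix.isUnit_det_of_invertible Q
  let M : Matrix (Fin d) (Fin d) (Polynomial ℂ) := A * (Q.map Polynomial.C)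
  -- columns i and j of M are divisible by X - C t₀
  have hcol : ∀ (s : Fin 2) (l : Fin d), l = e ⟨w s, hsub ⟨s, rfl⟩⟩ →
      ∀ k, (Polynomial.X - Polynomial.C t₀) ∣ M k l := by
    intro s l hl k
    rw [Polynomial.dvd_iff_isRoot]
    have : Polynomial.eval t₀ (M k l) = B.mulVec (w s) k := by
      simp only [M, Matrix.mul_apply, Polynomial.eval_finset_sum, Polynomial.eval_mul,
        Matrix.map_apply, Polynomial.eval_C, Matrix.mulVec, dotProduct]
      refine Finset.sum_congr rfl fun m _ => ?_
      rw [hQ m l, hl, hb' s]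
      rfl
    rw [Polynomial.IsRoot, this, hwker s]
    rfl
  have hM2 : (Polynomial.X - Polynomial.C t₀) ^ 2 ∣ M.det :=
    sq_dvd_det_of_two_columns d M t₀ i j hij (hcol 0 i hi) (hcol 1 j hj)
  have hMdet : M.det = A.det * Polynomial.C Q.det := by
    rw [Matrix.det_mul]
    congr 1
    exact (RingHom.map_det Polynomial.C Q).symm
  have hCunit : IsUnit (Polynomial.C Q.det) := Polynomial.isUnit_C.mpr hQdet
  rw [hMdet, hCunit.dvd_mul_right] at hM2
  exact h2 hM2
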